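/- arXiv:math/9210208 — 2 statements merged into one kernel-verified Lean document; each statement's English description precedes it below -/
import Mathlib

section
/- Let T: X → Y be a bounded linear operator between Banach spaces, let I ⊆ {0,…,p−1}, and set n := Σ_{i∈I} 2^i < 2^p. Then for every X-valued dyadic martingale (M_0,…,M_p) with M_i = Σ_{j=0}^{2^i−1} x_j h_j (x_j ∈ X, h_j the Haar functions) one has ‖Σ_{i∈I} T dM_i‖_2 ≤ δ(T|W_n, W_n)·‖M_p‖_2. -/
open MeasureTheory
open scoped ENNReal

noncomputable section

/-- The Rademacher function `r_{i+1}` of the paper: `r_1(t) = 1` on `[0,1/2) + ℤ`,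
`-1` on `[1/2,1) + ℤ`, and `r_{i+1}(t) = r_1(2^i t)`. -/
def rademacher (i : ℕ) (t : ℝ) : ℝ :=
  if Int.fract (2 ^ i * t) < 1 / 2 then 1 else -1

/-- The `n`-th Walsh function `w_n = ∏_i r_{i+1}^{n_i}` where `n = ∑_i n_i 2^i`. -/
def walsh (n : ℕ) (t : ℝ) : ℝ :=
  ∏ i ∈ Finset.range n, if n.testBit i then rademacher i t else 1

/-- Lebesgue measure on `[0,1]`. -/
def unitI : Measure ℝ := volume.restrict (Set.Icc 0 1)

/-- `f ∈ L_2^X`: `f : [0,1] → X` is (Bochner) measurable with `∫_0^1 ‖f(t)‖² dt < ∞`. -/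
def MemL2 {X : Type*} [NormedAddCommGroup X] (f : ℝ → X) : Prop := MemLp f 2 unitI

/-- `‖f‖_2 = (∫_0^1 ‖f(t)‖² dt)^{1/2}`. -/
def l2norm {X : Type*} [NormedAddCommGroup X] (f : ℝ → X) : ℝ :=
  Real.sqrt (∫ t, ‖f t‖ ^ 2 ∂unitI)

/-- The Walsh–Fourier coefficient `⟨f, w_i⟩ = ∫_0^1 f(t) w_i(t) dt`. -/
def walshCoeff {X : Type*} [NormedAddCommGroup X] [NormedSpace ℝ X] (f : ℝ → X) (i : ℕ) : X :=
  ∫ t, walsh i t • f t ∂unitI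

/-- The `n`-th Walsh partial sum `S_n(f) = ∑_{i<n} ⟨f,w_i⟩ w_i`. -/
def walshSum {X : Type*} [NormedAddCommGroup X] [NormedSpace ℝ X] (n : ℕ) (f : ℝ → X) :
    ℝ → X :=
  fun t => ∑ i ∈ Finset.range n, walsh i t • walshCoeff f i

/-- The ideal norm `δ(T | W_n, W_n)`: the least `c ≥ 0` with
`‖T ∘ S_n(f)‖_2 ≤ c ‖f‖_2` for all `f ∈ L_2^X`. -/
def walshDelta {X Y : Type*} [NormedAddCommGroup X] [NormedSpace ℝ X]
    [NormedAddCommGroup Y] [NormedSpace ℝ Y] (T : X →L[ℝ] Y) (n : ℕ) : ℝ :=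
  sInf {c : ℝ | 0 ≤ c ∧ ∀ f : ℝ → X, MemL2 f →
    l2norm (fun t => T (walshSum n f t)) ≤ c * l2norm f}

/-- The `j`-th Haar function (extended `1`-periodically): `h_0 ≡ 1` and, for
`j = 2^{p-1} + m` with `0 ≤ m < 2^{p-1}`, `h_j = 2^{(p-1)/2}` on `Δ_{2m+1}^{(p)}`,
`-2^{(p-1)/2}` on `Δ_{2m+2}^{(p)}` and `0` otherwise. -/
def haar (j : ℕ) (t : ℝ) : ℝ :=
  if j = 0 then 1
  else
    let q := Nat.log2 j
    let m := j - 2 ^ q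
    if (2 * m : ℝ) / 2 ^ (q + 1) ≤ Int.fract t ∧ Int.fract t < (2 * m + 1 : ℝ) / 2 ^ (q + 1)
      then (2 : ℝ) ^ ((q : ℝ) / 2)
    else if (2 * m + 1 : ℝ) / 2 ^ (q + 1) ≤ Int.fract t ∧
        Int.fract t < (2 * m + 2 : ℝ) / 2 ^ (q + 1)
      then -((2 : ℝ) ^ ((q : ℝ) / 2))
    else 0


namespace WalshAux

lemma mod_lt_of_testBit_false {x q : ℕ} (hx : x.testBit q = false) : x % 2 ^ (q+1) < 2 ^ q := by
  by_contra h
  push_neg at h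
  have h1 : x % 2 ^ (q+1) < 2 ^ (q+1) := Nat.mod_lt _ (Nat.two_pow_pos _)
  have h2 : (x % 2 ^ (q+1)).testBit q = true := by
    rw [Nat.testBit_eq_decide_div_mod_eq]
    have hd : x % 2 ^ (q+1) / 2 ^ q = 1 := by
      apply Nat.div_eq_of_lt_le (by omega)
      rw [pow_succ] at h1; omega
    simp [hd]
  rw [Nat.testBit_mod_two_pow] at h2
  simp [hx] at h2

lemma testBit_of_block {m q : ℕ} (h1 : 2 ^ q ≤ m) (h2 : m < 2 ^ (q+1)) : m.testBit q = true := by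
  rw [Nat.testBit_eq_decide_div_mod_eq]
  have hd : m / 2 ^ q = 1 := by
    apply Nat.div_eq_of_lt_le (by omega)
    rw [pow_succ] at h2; omega
  simp [hd]

lemma testBit_two_pow_add {a x q : ℕ} (hx : x.testBit a = false) :
    (2 ^ a + x).testBit q = (decide (q = a) || x.testBit q) := by
  rcases lt_trichotomy q a with hlt | heq | hgt
  · rw [Nat.testBit_two_pow_add_gt hlt]
    simp [Nat.ne_of_lt hlt]
  · subst heq
    rw [Nat.testBit_two_pow_add_eq, hx]
    simp
  · have hr : x % 2 ^ (a+1) < 2 ^ a := mod_lt_of_testBit_false hx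
    have hx2 : x = 2 ^ (a+1) * (x / 2 ^ (a+1)) + x % 2 ^ (a+1) := (Nat.div_add_mod _ _).symm
    have hlt2 : 2 ^ a + x % 2 ^ (a+1) < 2 ^ (a+1) := by
      have hps : (2:ℕ) ^ (a+1) = 2 ^ a * 2 := pow_succ 2 a
      omega
    have e1 : 2 ^ a + x = 2 ^ (a+1) * (x / 2 ^ (a+1)) + (2 ^ a + x % 2 ^ (a+1)) := by omega
    rw [e1, Nat.testBit_two_pow_mul_add _ hlt2 q]
    rw [if_neg (by omega)]
    conv_rhs => rw [hx2]
    rw [Nat.testBit_two_pow_mul_add _ (Nat.mod_lt _ (Nat.two_pow_pos _)) q]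
    rw [if_neg (by omega)]
    simp [Nat.ne_of_gt hgt]

lemma testBit_finsetSum (I : Finset ℕ) : ∀ q : ℕ,
    (∑ i ∈ I, 2 ^ i).testBit q = decide (q ∈ I) := by
  induction I using Finset.induction_on with
  | empty => simp
  | @insert a s ha ih =>
    intro q
    rw [Finset.sum_insert ha, testBit_two_pow_add (by rw [ih]; simp [ha]), ih]
    simp [Finset.mem_insert, eq_comm]

lemma sum_two_pow_lt {p : ℕ} {I : Finset ℕ} (hI : I ⊆ Finset.range p) :
    (∑ i ∈ I, 2 ^ i) < 2 ^ p := by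
  apply Nat.lt_pow_two_of_testBit
  intro i hi
  rw [testBit_finsetSum]
  simp only [decide_eq_false_iff_not]
  intro hmem
  exact absurd (Finset.mem_range.1 (hI hmem)) (by omega)

lemma testBit_log2 {m : ℕ} (h : m ≠ 0) : m.testBit m.log2 = true :=
  testBit_of_block (Nat.log2_self_le h) Nat.lt_log2_self

/-- comparison by bits -/
lemma lt_of_testBit_lt {x y q : ℕ} (hx : x.testBit q = false) (hy : y.testBit q = true)
    (hagree : ∀ i, q < i → x.testBit i = y.testBit i) : x < y := by
  have hc : x / 2 ^ (q+1) = y / 2 ^ (q+1) := by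
    have : x >>> (q+1) = y >>> (q+1) := by
      apply Nat.eq_of_testBit_eq
      intro j
      rw [Nat.testBit_shiftRight, Nat.testBit_shiftRight]
      exact hagree _ (by omega)
    simpa [Nat.shiftRight_eq_div_pow] using this
  have hxm : x % 2 ^ (q+1) < 2 ^ q := mod_lt_of_testBit_false hx
  have hym : 2 ^ q ≤ y % 2 ^ (q+1) := by
    apply Nat.ge_two_pow_of_testBit
    rw [Nat.testBit_mod_two_pow]
    simp [hy]
  have ex : x = 2 ^ (q+1) * (x / 2 ^ (q+1)) + x % 2 ^ (q+1) := (Nat.div_add_mod _ _).symm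
  have ey : y = 2 ^ (q+1) * (y / 2 ^ (q+1)) + y % 2 ^ (q+1) := (Nat.div_add_mod _ _).symm
  have hps : (2:ℕ) ^ (q+1) = 2 ^ q * 2 := pow_succ 2 q
  rw [hc] at ex
  omega

lemma xor_testBit_high {m n q i : ℕ} (hm : m < 2 ^ (q+1)) (hi : q < i) :
    (m ^^^ n).testBit i = n.testBit i := by
  rw [Nat.testBit_xor, Nat.testBit_lt_two_pow (lt_of_lt_of_le hm (Nat.pow_le_pow_right (by norm_num) hi))]
  simp

lemma xor_lt_of_block {m n q : ℕ} (h1 : 2 ^ q ≤ m) (h2 : m < 2 ^ (q+1))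
    (hn : n.testBit q = true) : m ^^^ n < n := by
  apply lt_of_testBit_lt _ hn
  · intro i hi; exact xor_testBit_high h2 hi
  · rw [Nat.testBit_xor, testBit_of_block h1 h2, hn]; rfl

lemma testBit_of_xor_lt {m n q : ℕ} (h1 : 2 ^ q ≤ m) (h2 : m < 2 ^ (q+1))
    (hlt : m ^^^ n < n) : n.testBit q = true := by
  by_contra h
  rw [Bool.not_eq_true] at h
  have : n < m ^^^ n := by
    apply lt_of_testBit_lt h
    · rw [Nat.testBit_xor, testBit_of_block h1 h2, h]; rfl
    · intro i hi; exact (xor_testBit_high h2 hi).symm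
  omega

lemma xor_div_eq {k b c : ℕ} (hbc : b < c) : (k ^^^ 2 ^ b) / 2 ^ c = k / 2 ^ c := by
  have : (k ^^^ 2 ^ b) >>> c = k >>> c := by
    apply Nat.eq_of_testBit_eq
    intro j
    rw [Nat.testBit_shiftRight, Nat.testBit_shiftRight, Nat.testBit_xor,
      Nat.testBit_two_pow_of_ne (by omega)]
    simp
  simpa [Nat.shiftRight_eq_div_pow] using this

lemma xor_div_self {k b : ℕ} : (k ^^^ 2 ^ b) / 2 ^ b = (k / 2 ^ b) ^^^ 1 := by
  have : (k ^^^ 2 ^ b) >>> b = (k >>> b) ^^^ 1 := by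
    apply Nat.eq_of_testBit_eq
    intro j
    rw [Nat.testBit_shiftRight, Nat.testBit_xor, Nat.testBit_xor, Nat.testBit_shiftRight]
    have : (1 : ℕ) = 2 ^ 0 := rfl
    rw [this, Nat.testBit_two_pow, Nat.testBit_two_pow]
    congr 1
    simp only [decide_eq_decide]
    omega
  simpa [Nat.shiftRight_eq_div_pow] using this

lemma two_mul_xor_one (m : ℕ) : (2 * m) ^^^ 1 = 2 * m + 1 := by
  apply Nat.eq_of_testBit_eq
  intro j
  cases j with
  | zero => simp [Nat.testBit_xor, Nat.testBit_zero, Nat.mul_add_mod]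
  | succ i =>
    rw [Nat.testBit_xor, Nat.testBit_add_one, Nat.testBit_add_one, Nat.testBit_add_one]
    have e2 : (2 * m + 1) / 2 = 2 * m / 2 := by omega
    have e1 : (1:ℕ) / 2 = 0 := rfl
    rw [e2, e1]
    simp

lemma two_mul_add_one_xor_one (m : ℕ) : (2 * m + 1) ^^^ 1 = 2 * m := by
  rw [← two_mul_xor_one m, Nat.xor_assoc]
  simp


/-- Discrete Walsh matrix: `Wd p m k = w_m` on the `k`-th dyadic interval of level `p`. -/
def Wd (p m k : ℕ) : ℝ :=
  ∏ i ∈ Finset.range p, (if m.testBit i && k.testBit (p-1-i) then (-1 : ℝ) else 1)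

lemma Wd_mul_k (p m k k' : ℕ) : Wd p m k * Wd p m k' = Wd p m (k ^^^ k') := by
  rw [Wd, Wd, Wd, ← Finset.prod_mul_distrib]
  apply Finset.prod_congr rfl
  intro i _
  rw [Nat.testBit_xor]
  cases m.testBit i <;> cases k.testBit (p-1-i) <;> cases k'.testBit (p-1-i) <;> norm_num

lemma Wd_mul_m (p m m' k : ℕ) : Wd p m k * Wd p m' k = Wd p (m ^^^ m') k := by
  rw [Wd, Wd, Wd, ← Finset.prod_mul_distrib]
  apply Finset.prod_congr rfl
  intro i _
  rw [Nat.testBit_xor]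
  cases m.testBit i <;> cases m'.testBit i <;> cases k.testBit (p-1-i) <;> norm_num

@[simp] lemma Wd_zero_k (p m : ℕ) : Wd p m 0 = 1 := by
  rw [Wd]; apply Finset.prod_eq_one; intro i _; simp

@[simp] lemma Wd_zero_m (p k : ℕ) : Wd p 0 k = 1 := by
  rw [Wd]; apply Finset.prod_eq_one; intro i _; simp

lemma Wd_two_pow_k {p b : ℕ} (hb : b < p) (m : ℕ) :
    Wd p m (2 ^ b) = if m.testBit (p-1-b) then (-1:ℝ) else 1 := by
  rw [Wd]
  rw [Finset.prod_eq_single (p-1-b)]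
  · rw [show p-1-(p-1-b) = b by omega, Nat.testBit_two_pow_self]
    cases m.testBit (p-1-b) <;> simp
  · intro i hi hne
    rw [Nat.testBit_two_pow_of_ne (by rw [Finset.mem_range] at hi; omega)]
    simp
  · intro h; exact absurd (Finset.mem_range.2 (by omega)) h

lemma Wd_two_pow_m {p i : ℕ} (hi : i < p) (k : ℕ) :
    Wd p (2 ^ i) k = if k.testBit (p-1-i) then (-1:ℝ) else 1 := by
  rw [Wd]
  rw [Finset.prod_eq_single i]
  · rw [Nat.testBit_two_pow_self]
    cases k.testBit (p-1-i) <;> simp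
  · intro i' hi' hne
    rw [Nat.testBit_two_pow_of_ne (Ne.symm hne)]
    simp
  · intro h; exact absurd (Finset.mem_range.2 hi) h

lemma Wd_flip_k {p b : ℕ} (hb : b < p) (m k : ℕ) :
    Wd p m (k ^^^ 2 ^ b) = (if m.testBit (p-1-b) then (-1:ℝ) else 1) * Wd p m k := by
  rw [← Wd_mul_k, Wd_two_pow_k hb, mul_comm]

lemma Wd_flip_m {p i : ℕ} (hi : i < p) (m k : ℕ) :
    Wd p (m ^^^ 2 ^ i) k = (if k.testBit (p-1-i) then (-1:ℝ) else 1) * Wd p m k := by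
  rw [← Wd_mul_m, Wd_two_pow_m hi, mul_comm]

lemma xor_ne_self {k b : ℕ} : k ^^^ 2 ^ b ≠ k := by
  intro h
  have : (2:ℕ) ^ b = 0 := by
    have := congrArg (k ^^^ ·) h
    simpa [← Nat.xor_assoc] using this
  exact absurd this (by positivity)

/-- Sum of a nontrivial discrete Walsh character over all intervals vanishes,
given a weight that is insensitive to flipping bit `p-1-i`. -/
lemma sum_Wd_mul_eq_zero {p m i : ℕ} (hi : i < p) (hbit : m.testBit i = true)
    (H : ℕ → ℝ) (hH : ∀ k, H (k ^^^ 2 ^ (p-1-i)) = H k) :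
    ∑ k ∈ Finset.range (2 ^ p), Wd p m k * H k = 0 := by
  apply Finset.sum_involution (fun k _ => k ^^^ 2 ^ (p-1-i))
  · intro k _
    rw [Wd_flip_k (by omega), hH, show p-1-(p-1-i) = i by omega, hbit]
    simp only [if_pos]
    ring
  · intro k _ _
    exact xor_ne_self
  · intro k _
    rw [Nat.xor_assoc]
    simp
  · intro k hk
    exact Finset.mem_range.2 (Nat.xor_lt_two_pow (Finset.mem_range.1 hk)
        (Nat.pow_lt_pow_right (by norm_num) (by omega)))

lemma sum_Wd_k {p m : ℕ} (hm : m < 2 ^ p) (h0 : m ≠ 0) :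
    ∑ k ∈ Finset.range (2 ^ p), Wd p m k = 0 := by
  have := sum_Wd_mul_eq_zero (p := p) (i := m.log2)
    ((Nat.log2_lt h0).2 hm) (testBit_log2 h0) (fun _ => 1) (fun _ => rfl)
  simpa using this

lemma sum_Wd_m {p k : ℕ} (hk : k < 2 ^ p) (h0 : k ≠ 0) :
    ∑ m ∈ Finset.range (2 ^ p), Wd p m k = 0 := by
  have hb : k.log2 < p := (Nat.log2_lt h0).2 hk
  apply Finset.sum_involution (fun m _ => m ^^^ 2 ^ (p-1-k.log2))
  · intro m _
    rw [Wd_flip_m (by omega), show p-1-(p-1-k.log2) = k.log2 by omega, testBit_log2 h0]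
    simp only [if_pos]
    ring
  · intro m _ _
    exact xor_ne_self
  · intro m _
    rw [Nat.xor_assoc]
    simp
  · intro m hm
    exact Finset.mem_range.2 (Nat.xor_lt_two_pow (Finset.mem_range.1 hm)
        (Nat.pow_lt_pow_right (by norm_num) (by omega)))

lemma sum_Wd_inversion {p k k' : ℕ} (hk : k < 2 ^ p) (hk' : k' < 2 ^ p) :
    ∑ m ∈ Finset.range (2 ^ p), Wd p m k * Wd p m k' =
      if k = k' then (2 ^ p : ℝ) else 0 := by
  simp_rw [Wd_mul_k]
  by_cases h : k = k'
  · subst h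
    simp [Nat.xor_self, if_pos rfl]
  · rw [if_neg h]
    apply sum_Wd_m (Nat.xor_lt_two_pow hk hk')
    simpa [xor_eq_zero_iff] using h


/-- Discrete Haar function values. -/
def Hd (p j k : ℕ) : ℝ :=
  if j = 0 then 1
  else
    if k / 2 ^ (p-1-j.log2) = 2*(j - 2 ^ j.log2) then (2:ℝ) ^ ((j.log2 : ℝ)/2)
    else if k / 2 ^ (p-1-j.log2) = 2*(j - 2 ^ j.log2)+1 then -((2:ℝ) ^ ((j.log2 : ℝ)/2))
    else 0

@[simp] lemma Hd_zero (p k : ℕ) : Hd p 0 k = 1 := by rw [Hd]; simp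

lemma Hd_flip_low {p j k b : ℕ} (hj : j ≠ 0) (hb : b < p-1-j.log2) :
    Hd p j (k ^^^ 2 ^ b) = Hd p j k := by
  rw [Hd, Hd, if_neg hj, if_neg hj, xor_div_eq hb]

lemma Hd_flip {p j k : ℕ} (hj : j ≠ 0) :
    Hd p j (k ^^^ 2 ^ (p-1-j.log2)) = - Hd p j k := by
  rw [Hd, Hd, if_neg hj, if_neg hj, xor_div_self]
  set v := k / 2 ^ (p-1-j.log2) with hv
  set m := j - 2 ^ j.log2 with hm
  by_cases h1 : v = 2*m
  · rw [h1, two_mul_xor_one, if_neg (by omega), if_pos rfl, if_pos rfl]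
  · by_cases h2 : v = 2*m+1
    · rw [h2, two_mul_add_one_xor_one, if_pos rfl, if_neg (by omega), if_pos rfl]
      ring
    · have h3 : v ^^^ 1 ≠ 2*m := by
        intro h; apply h2
        have := congrArg (· ^^^ 1) h
        simpa [Nat.xor_assoc, two_mul_xor_one] using this
      have h4 : v ^^^ 1 ≠ 2*m+1 := by
        intro h; apply h1
        have := congrArg (· ^^^ 1) h
        simpa [Nat.xor_assoc, two_mul_add_one_xor_one] using this
      rw [if_neg h3, if_neg h4, if_neg h1, if_neg h2]
      ring

/-- Support of the discrete Walsh coefficients of a Haar function. -/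
lemma sum_Wd_Hd_eq_zero {p j m : ℕ} (hj : j ≠ 0) (hjp : j < 2 ^ p) (hm : m < 2 ^ p)
    (hnb : m < 2 ^ j.log2 ∨ 2 ^ (j.log2+1) ≤ m) :
    ∑ k ∈ Finset.range (2 ^ p), Wd p m k * Hd p j k = 0 := by
  have hq : j.log2 < p := (Nat.log2_lt hj).2 hjp
  rcases hnb with hlow | hhigh
  · apply Finset.sum_involution (fun k _ => k ^^^ 2 ^ (p-1-j.log2))
    · intro k _
      rw [Wd_flip_k (by omega), show p-1-(p-1-j.log2) = j.log2 by omega,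
        Nat.testBit_lt_two_pow hlow, Hd_flip hj]
      simp only [Bool.false_eq_true, if_false]
      ring
    · intro k _ _
      exact xor_ne_self
    · intro k _
      rw [Nat.xor_assoc]
      simp
    · intro k hk
      exact Finset.mem_range.2 (Nat.xor_lt_two_pow (Finset.mem_range.1 hk)
        (Nat.pow_lt_pow_right (by norm_num) (by omega)))
  · have hm0 : m ≠ 0 := by
      have : 0 < 2 ^ (j.log2+1) := Nat.two_pow_pos _
      omega
    have hi : m.log2 < p := (Nat.log2_lt hm0).2 hm
    have hqi : j.log2 < m.log2 := by
      have h1 : m < 2 ^ (m.log2 + 1) := Nat.lt_log2_self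
      have h2 : 2 ^ (j.log2+1) < 2 ^ (m.log2+1) := lt_of_le_of_lt hhigh h1
      have := (Nat.pow_lt_pow_iff_right (by norm_num : (1:ℕ) < 2)).1 h2
      omega
    exact sum_Wd_mul_eq_zero hi (testBit_log2 hm0) (Hd p j)
      (fun k => Hd_flip_low hj (by omega))

lemma sum_sum_Wd_Hd {p j κ : ℕ} (hκ : κ < 2 ^ p) :
    ∑ m ∈ Finset.range (2 ^ p), (∑ k ∈ Finset.range (2 ^ p), Wd p m k * Hd p j k) * Wd p m κ
      = (2 ^ p : ℝ) * Hd p j κ := by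
  simp_rw [Finset.sum_mul]
  rw [Finset.sum_comm]
  have h1 : ∀ k ∈ Finset.range (2 ^ p),
      ∑ m ∈ Finset.range (2 ^ p), Wd p m k * Hd p j k * Wd p m κ
        = Hd p j k * (if k = κ then (2 ^ p : ℝ) else 0) := by
    intro k hk
    rw [← sum_Wd_inversion (Finset.mem_range.1 hk) hκ, Finset.mul_sum]
    apply Finset.sum_congr rfl
    intro m _
    ring
  rw [Finset.sum_congr rfl h1]
  simp only [mul_ite, mul_zero]
  rw [Finset.sum_ite_eq' (Finset.range (2 ^ p)) κ]
  rw [if_pos (Finset.mem_range.2 hκ)]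
  ring


/-- The index of the level-`p` dyadic interval containing `t`. -/
def kf (p : ℕ) (t : ℝ) : ℕ := (⌊(2:ℝ) ^ p * t⌋).toNat

lemma kf_spec {p : ℕ} {t : ℝ} (ht : t ∈ Set.Ico (0:ℝ) 1) :
    ((kf p t : ℝ) ≤ 2 ^ p * t ∧ 2 ^ p * t < kf p t + 1) ∧ kf p t < 2 ^ p := by
  obtain ⟨h0, h1⟩ := ht
  have h2 : (0:ℝ) < 2 ^ p := by positivity
  have hu0 : (0:ℝ) ≤ 2 ^ p * t := by positivity
  have hfl : (0:ℤ) ≤ ⌊(2:ℝ) ^ p * t⌋ := Int.floor_nonneg.2 hu0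
  have hcast : ((kf p t : ℝ)) = ((⌊(2:ℝ) ^ p * t⌋ : ℤ) : ℝ) := by
    rw [kf]
    exact_mod_cast congrArg (fun z : ℤ => (z : ℝ)) (Int.toNat_of_nonneg hfl)
  refine ⟨⟨by rw [hcast]; exact Int.floor_le _, by rw [hcast]; exact Int.lt_floor_add_one _⟩, ?_⟩
  have hu : (2:ℝ) ^ p * t < 2 ^ p := by nlinarith
  have : ⌊(2:ℝ) ^ p * t⌋ < (2 ^ p : ℕ) := Int.floor_lt.2 (by push_cast; linarith)
  rw [kf]
  omega

lemma kf_eq {p k : ℕ} {t : ℝ} (hl : (k:ℝ)/2 ^ p ≤ t) (hr : t < ((k:ℝ)+1)/2 ^ p) :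
    kf p t = k := by
  have h2 : (0:ℝ) < 2 ^ p := by positivity
  have hl' : (k:ℝ) ≤ 2 ^ p * t := by rw [div_le_iff₀ h2] at hl; linarith
  have hr' : 2 ^ p * t < (k:ℝ) + 1 := by rw [lt_div_iff₀ h2] at hr; linarith
  have hfe : ⌊(2:ℝ) ^ p * t⌋ = (k:ℤ) := Int.floor_eq_iff.2 ⟨by exact_mod_cast hl',
    by exact_mod_cast hr'⟩
  rw [kf, hfe]
  exact Int.toNat_natCast k

lemma integral_step (p : ℕ) (F : ℕ → ℝ) :
    ∫ t, F (kf p t) ∂unitI = (2 ^ p : ℝ)⁻¹ * ∑ k ∈ Finset.range (2 ^ p), F k := by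
  have h2 : (0:ℝ) < 2 ^ p := by positivity
  set a : ℕ → ℝ := fun k => (k : ℝ)/2 ^ p with ha
  have hle : ∀ k : ℕ, a k ≤ a (k+1) := by
    intro k
    rw [ha]
    apply div_le_div_of_nonneg_right ?_ (le_of_lt h2)
    push_cast
    linarith
  have hpiece0 : ∀ k, k < 2 ^ p →
      ∀ᵐ t ∂(volume : Measure ℝ), t ∈ Set.Ioc (a k) (a (k+1)) → F (kf p t) = F k := by
    intro k hk
    have hne : ∀ᵐ (t:ℝ) ∂(volume : Measure ℝ), t ≠ a (k+1) := by
      rw [ae_iff]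
      simp only [not_not]
      rw [Set.setOf_eq_eq_singleton]
      exact Real.volume_singleton
    filter_upwards [hne] with t htne htm
    have h1 : a k ≤ t := le_of_lt htm.1
    have h3 : t < a (k+1) := lt_of_le_of_ne htm.2 htne
    have hkf : kf p t = k := by
      apply kf_eq
      · rw [ha] at h1; exact h1
      · rw [ha] at h3; push_cast at h3 ⊢; exact h3
    rw [hkf]
  have hpiece : ∀ k, k < 2 ^ p →
      (fun t => F (kf p t)) =ᶠ[ae (volume.restrict (Set.Ioc (a k) (a (k+1))))]
        (fun _ => F k) := by
    intro k hk
    rw [Filter.EventuallyEq]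
    rw [ae_restrict_iff' measurableSet_Ioc]
    exact hpiece0 k hk
  have hInt : ∀ k, k < 2 ^ p →
      IntervalIntegrable (fun t => F (kf p t)) volume (a k) (a (k+1)) := by
    intro k hk
    rw [intervalIntegrable_iff_integrableOn_Ioc_of_le (hle k)]
    exact (integrableOn_const measure_Ioc_lt_top.ne).congr (hpiece k hk).symm
  have hsum := intervalIntegral.sum_integral_adjacent_intervals (a := a)
    (μ := (volume : Measure ℝ)) (n := 2 ^ p) hInt
  have ha0 : a 0 = 0 := by rw [ha]; simp
  have ha1 : a (2 ^ p) = 1 := by rw [ha]; rw [div_eq_one_iff_eq (ne_of_gt h2)]; push_cast; ring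
  have hval : ∀ k ∈ Finset.range (2 ^ p),
      (∫ t in a k..a (k+1), F (kf p t)) = (2 ^ p : ℝ)⁻¹ * F k := by
    intro k hk
    have hk' := Finset.mem_range.1 hk
    rw [intervalIntegral.integral_congr_ae (g := fun _ => F k) ?_]
    · rw [intervalIntegral.integral_const, ha]
      rw [smul_eq_mul]
      push_cast
      field_simp
      try ring
    · rw [Set.uIoc_of_le (hle k)]
      exact hpiece0 k hk'
  rw [unitI]
  rw [show (∫ t, F (kf p t) ∂(volume.restrict (Set.Icc (0:ℝ) 1))) =
    ∫ t in Set.Icc (0:ℝ) 1, F (kf p t) from rfl]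
  rw [integral_Icc_eq_integral_Ioc, ← intervalIntegral.integral_of_le (by norm_num : (0:ℝ) ≤ 1)]
  rw [← ha0, ← ha1, ← hsum, Finset.sum_congr rfl hval, ← Finset.mul_sum]


lemma rademacher_sq (i : ℕ) (t : ℝ) : rademacher i t * rademacher i t = 1 := by
  rw [rademacher]; split_ifs <;> norm_num

lemma abs_rademacher (i : ℕ) (t : ℝ) : |rademacher i t| = 1 := by
  rw [rademacher]; split_ifs <;> norm_num

lemma walsh_eq_prod {m N : ℕ} (hN : m < 2 ^ N) (t : ℝ) :
    walsh m t = ∏ i ∈ Finset.range N, (if m.testBit i then rademacher i t else 1) := by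
  rw [walsh]
  rcases le_total m N with h | h
  · apply Finset.prod_subset (Finset.range_subset_range.2 h)
    intro i _ hnot
    rw [Finset.mem_range] at hnot
    push_neg at hnot
    have hbit : m.testBit i = false := Nat.testBit_lt_two_pow
      (lt_of_lt_of_le (Nat.lt_two_pow_self (n := m)) (Nat.pow_le_pow_right (by norm_num) hnot))
    rw [hbit]
    simp
  · symm
    apply Finset.prod_subset (Finset.range_subset_range.2 h)
    intro i _ hnot
    rw [Finset.mem_range] at hnot
    push_neg at hnot
    have hbit : m.testBit i = false := Nat.testBit_lt_two_pow
      (lt_of_lt_of_le hN (Nat.pow_le_pow_right (by norm_num) hnot))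
    rw [hbit]
    simp

lemma walsh_mul (a b : ℕ) (t : ℝ) : walsh a t * walsh b t = walsh (a ^^^ b) t := by
  have ha : a < 2 ^ (a + b) := lt_of_lt_of_le ((Nat.lt_two_pow_self (n := a)))
    (Nat.pow_le_pow_right (by norm_num) (by omega))
  have hb : b < 2 ^ (a + b) := lt_of_lt_of_le ((Nat.lt_two_pow_self (n := b)))
    (Nat.pow_le_pow_right (by norm_num) (by omega))
  have hxor : a ^^^ b < 2 ^ (a + b) := Nat.xor_lt_two_pow ha hb
  rw [walsh_eq_prod ha t, walsh_eq_prod hb t, walsh_eq_prod hxor t, ← Finset.prod_mul_distrib]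
  apply Finset.prod_congr rfl
  intro i _
  rw [Nat.testBit_xor]
  cases a.testBit i <;> cases b.testBit i <;> simp [rademacher_sq]

lemma abs_walsh (m : ℕ) (t : ℝ) : |walsh m t| = 1 := by
  rw [walsh, Finset.abs_prod]
  apply Finset.prod_eq_one
  intro i _
  cases m.testBit i <;> simp [abs_rademacher]

lemma nat_div_eq_iff {v c B : ℕ} (hB : 0 < B) : v / B = c ↔ (c * B ≤ v ∧ v < (c+1)*B) := by
  constructor
  · intro h
    subst h
    refine ⟨Nat.div_mul_le_self v B, ?_⟩
    have h1 := Nat.div_add_mod v B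
    have h2 := Nat.mod_lt v hB
    calc v = B * (v/B) + v % B := h1.symm
      _ < B * (v/B) + B := by omega
      _ = (v/B + 1) * B := by ring
  · rintro ⟨h1, h2⟩
    exact Nat.div_eq_of_lt_le h1 h2

lemma rademacher_discr {p i : ℕ} (hi : i < p) {t : ℝ} (ht : t ∈ Set.Ico (0:ℝ) 1) :
    rademacher i t = (if (kf p t).testBit (p-1-i) then (-1:ℝ) else 1) := by
  obtain ⟨⟨hk1, hk2⟩, _⟩ := kf_spec (p := p) ht
  set k := kf p t with hkdef
  set d := p - i with hd
  have hd1 : 1 ≤ d := by omega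
  have hpd : (2:ℝ) ^ p = 2 ^ i * 2 ^ d := by rw [← pow_add]; congr 1; omega
  set r := k % 2 ^ d with hr
  set c := k / 2 ^ d with hc
  have hkdc : k = 2 ^ d * c + r := (Nat.div_add_mod _ _).symm
  have hrlt : r < 2 ^ d := Nat.mod_lt _ (Nat.two_pow_pos _)
  have h2d : (0:ℝ) < 2 ^ d := by positivity
  have hkr : (k:ℝ) = 2 ^ d * c + r := by exact_mod_cast congrArg (fun n : ℕ => (n:ℝ)) hkdc
  have hs0 : (0:ℝ) ≤ 2 ^ p * t - k := by linarith
  have hs1 : 2 ^ p * t - k < 1 := by linarith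
  have he : (2:ℝ) ^ i * t = (c:ℝ) + ((r:ℝ) + (2 ^ p * t - k)) / 2 ^ d := by
    have hmul : ((2:ℝ) ^ i * t) * 2 ^ d = ((c:ℝ) + ((r:ℝ) + (2 ^ p * t - k)) / 2 ^ d) * 2 ^ d := by
      rw [add_mul, div_mul_cancel₀ _ (ne_of_gt h2d)]
      have h1 : (2:ℝ) ^ i * t * 2 ^ d = 2 ^ p * t := by rw [hpd]; ring
      rw [h1]
      linarith [hkr]
    exact mul_right_cancel₀ (ne_of_gt h2d) hmul
  have hfr : Int.fract ((2:ℝ) ^ i * t) = ((r:ℝ) + (2 ^ p * t - k)) / 2 ^ d := by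
    rw [he, Int.fract_natCast_add]
    apply Int.fract_eq_self.2
    constructor
    · apply div_nonneg _ (le_of_lt h2d)
      have : (0:ℝ) ≤ (r:ℝ) := Nat.cast_nonneg r
      linarith
    · rw [div_lt_one h2d]
      have : (r:ℝ) + 1 ≤ 2 ^ d := by exact_mod_cast hrlt
      linarith
  have hcond : (Int.fract ((2:ℝ) ^ i * t) < 1/2) ↔ r < 2 ^ (d-1) := by
    rw [hfr, div_lt_iff₀ h2d]
    have h2d1 : (1:ℝ)/2 * 2 ^ d = 2 ^ (d-1) := by
      have hdd : (2:ℝ) ^ d = 2 ^ (d-1) * 2 := by rw [← pow_succ]; congr 1; omega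
      rw [hdd]; ring
    rw [h2d1]
    constructor
    · intro h
      by_contra hcon
      push_neg at hcon
      have hcon' : ((2:ℝ)) ^ (d-1) ≤ (r:ℝ) := by exact_mod_cast hcon
      linarith
    · intro h
      have h' : (r:ℝ) + 1 ≤ 2 ^ (d-1) := by exact_mod_cast h
      linarith
  have hbit : ((k.testBit (p-1-i)) = false) ↔ r < 2 ^ (d-1) := by
    have hb : p-1-i = d-1 := by omega
    rw [hb]
    constructor
    · intro h
      have h2 := mod_lt_of_testBit_false h
      rw [show d-1+1 = d by omega] at h2
      exact h2
    · intro h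
      have hmm : (k % 2 ^ d).testBit (d-1) = k.testBit (d-1) := by
        rw [Nat.testBit_mod_two_pow]
        simp [show d-1 < d by omega]
      rw [← hmm]
      exact Nat.testBit_lt_two_pow h
  rw [rademacher]
  by_cases hb : k.testBit (p-1-i)
  · have hnot : ¬ (Int.fract ((2:ℝ) ^ i * t) < 1/2) := by
      rw [hcond]
      intro hcon
      rw [← hbit] at hcon
      simp [hb] at hcon
    rw [if_neg hnot, if_pos hb]
  · have hbf : k.testBit (p-1-i) = false := by simpa using hb
    have hyes : Int.fract ((2:ℝ) ^ i * t) < 1/2 := by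
      rw [hcond]
      exact hbit.1 hbf
    rw [if_pos hyes, if_neg hb]

lemma walsh_discr {p m : ℕ} (hm : m < 2 ^ p) {t : ℝ} (ht : t ∈ Set.Ico (0:ℝ) 1) :
    walsh m t = Wd p m (kf p t) := by
  rw [walsh_eq_prod hm t, Wd]
  apply Finset.prod_congr rfl
  intro i hi
  rw [rademacher_discr (Finset.mem_range.1 hi) ht]
  cases hb : m.testBit i <;> simp [hb]

lemma haar_discr {p j : ℕ} (hj : j < 2 ^ p) {t : ℝ} (ht : t ∈ Set.Ico (0:ℝ) 1) :
    haar j t = Hd p j (kf p t) := by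
  by_cases h0 : j = 0
  · subst h0; rw [haar, Hd]; simp
  have hq : j.log2 < p := (Nat.log2_lt h0).2 hj
  have hfr : Int.fract t = t := Int.fract_eq_self.2 ⟨ht.1, ht.2⟩
  obtain ⟨⟨hk1, hk2⟩, _⟩ := kf_spec (p := p) ht
  have h2p : (0:ℝ) < 2 ^ p := by positivity
  have hpd : (2:ℝ) ^ p = 2 ^ (j.log2+1) * 2 ^ (p-1-j.log2) := by rw [← pow_add]; congr 1; omega
  have hintle : ∀ A : ℕ, ((A:ℝ) ≤ 2 ^ p * t ↔ A ≤ kf p t) := by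
    intro A
    constructor
    · intro h
      have h1 : (A:ℝ) < (kf p t : ℝ) + 1 := lt_of_le_of_lt h hk2
      have h2 : A < kf p t + 1 := by exact_mod_cast h1
      omega
    · intro h
      have h1 : (A:ℝ) ≤ kf p t := by exact_mod_cast h
      linarith
  have hintlt : ∀ A : ℕ, (2 ^ p * t < (A:ℝ) ↔ kf p t < A) := by
    intro A
    constructor
    · intro h
      have h1 : (kf p t : ℝ) < A := lt_of_le_of_lt hk1 h
      exact_mod_cast h1
    · intro h
      have h1 : (kf p t : ℝ) + 1 ≤ A := by exact_mod_cast h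
      linarith
  have hcond : ∀ c : ℕ, (((c:ℝ))/2 ^ (j.log2+1) ≤ t ∧ t < ((c:ℝ)+1)/2 ^ (j.log2+1)) ↔
      kf p t / 2 ^ (p-1-j.log2) = c := by
    intro c
    have hcast1 : ∀ A : ℕ, (((A:ℕ):ℝ)/2 ^ p ≤ t ↔ A ≤ kf p t) := by
      intro A
      rw [div_le_iff₀ h2p, mul_comm]
      exact hintle A
    have hcast2 : ∀ A : ℕ, (t < ((A:ℕ):ℝ)/2 ^ p ↔ kf p t < A) := by
      intro A
      rw [lt_div_iff₀ h2p, mul_comm]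
      exact hintlt A
    have hpb : ((c * 2 ^ (p-1-j.log2) : ℕ):ℝ)/2 ^ p = (c:ℝ)/2 ^ (j.log2+1) := by
      push_cast
      rw [hpd, mul_div_mul_right _ _ (by positivity : (2:ℝ) ^ (p-1-j.log2) ≠ 0)]
    have hpb2 : (((c+1) * 2 ^ (p-1-j.log2) : ℕ):ℝ)/2 ^ p = ((c:ℝ)+1)/2 ^ (j.log2+1) := by
      push_cast
      rw [hpd, mul_div_mul_right _ _ (by positivity : (2:ℝ) ^ (p-1-j.log2) ≠ 0)]
    rw [← hpb, ← hpb2, hcast1 (c * 2 ^ (p-1-j.log2)), hcast2 ((c+1) * 2 ^ (p-1-j.log2)),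
      nat_div_eq_iff (Nat.two_pow_pos _)]
  simp only [haar, Hd, if_neg h0, hfr]
  have hC1 := hcond (2*(j - 2 ^ (j.log2)))
  push_cast at hC1
  have hC2 := hcond (2*(j - 2 ^ (j.log2))+1)
  push_cast at hC2
  rw [show (2*((j - 2 ^ (j.log2) : ℕ):ℝ)+1+1) = 2*((j - 2 ^ (j.log2):ℕ):ℝ)+2 by ring] at hC2
  simp only [hC1, hC2]


lemma measurable_rademacher (i : ℕ) : Measurable (rademacher i) := by
  unfold rademacher
  exact Measurable.ite
    (measurableSet_lt (measurable_fract.comp (measurable_const_mul _)) measurable_const)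
    measurable_const measurable_const

lemma measurable_walsh (m : ℕ) : Measurable (walsh m) := by
  unfold walsh
  apply Finset.measurable_prod
  intro i _
  by_cases hb : m.testBit i
  · simpa [hb] using measurable_rademacher i
  · simp [hb]

lemma measurable_haar (j : ℕ) : Measurable (haar j) := by
  by_cases h0 : j = 0
  · have hh : haar j = fun _ => (1:ℝ) := by
      funext t
      subst h0
      simp [haar]
    rw [hh]
    exact measurable_const
  · have hh : haar j = fun t =>
        if (2 * ((j - 2 ^ j.log2 : ℕ):ℝ)) / 2 ^ (j.log2 + 1) ≤ Int.fract t ∧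
            Int.fract t < (2 * ((j - 2 ^ j.log2 : ℕ):ℝ) + 1) / 2 ^ (j.log2 + 1)
          then (2:ℝ) ^ ((j.log2 : ℝ)/2)
        else if (2 * ((j - 2 ^ j.log2 : ℕ):ℝ) + 1) / 2 ^ (j.log2 + 1) ≤ Int.fract t ∧
            Int.fract t < (2 * ((j - 2 ^ j.log2 : ℕ):ℝ) + 2) / 2 ^ (j.log2 + 1)
          then -((2:ℝ) ^ ((j.log2 : ℝ)/2))
        else 0 := by
      funext t
      simp only [haar, if_neg h0]
    rw [hh]
    apply Measurable.ite
    · exact (measurableSet_le measurable_const measurable_fract).inter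
        (measurableSet_lt measurable_fract measurable_const)
    · exact measurable_const
    apply Measurable.ite
    · exact (measurableSet_le measurable_const measurable_fract).inter
        (measurableSet_lt measurable_fract measurable_const)
    · exact measurable_const
    · exact measurable_const

lemma abs_haar_le (j : ℕ) (t : ℝ) : |haar j t| ≤ 2 ^ ((j.log2 : ℝ)/2) := by
  by_cases h0 : j = 0
  · subst h0
    simp only [haar, if_pos rfl]
    norm_num
  · simp only [haar, if_neg h0]
    split_ifs
    · rw [abs_of_nonneg (by positivity)]
    · rw [abs_neg, abs_of_nonneg (by positivity)]
    · rw [abs_zero]; positivity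

instance : IsProbabilityMeasure unitI := by
  constructor
  rw [unitI, Measure.restrict_apply_univ, Real.volume_Icc]
  norm_num

lemma integrable_unitI {g : ℝ → ℝ} (hg : Measurable g) (C : ℝ) (hC : ∀ t, |g t| ≤ C) :
    Integrable g unitI :=
  ⟨hg.aestronglyMeasurable,
    HasFiniteIntegral.of_bounded (C := C) (Filter.Eventually.of_forall fun t => by
      rw [Real.norm_eq_abs]; exact hC t)⟩

lemma ae_Ico : ∀ᵐ t ∂unitI, t ∈ Set.Ico (0:ℝ) 1 := by
  have h1 : ∀ᵐ t ∂unitI, t ∈ Set.Icc (0:ℝ) 1 := by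
    rw [unitI]; exact ae_restrict_mem measurableSet_Icc
  have h2 : ∀ᵐ (t:ℝ) ∂(volume : Measure ℝ), t ≠ 1 := by
    rw [ae_iff]
    simp only [not_not]
    rw [Set.setOf_eq_eq_singleton]
    exact Real.volume_singleton
  have h2' : ∀ᵐ t ∂unitI, t ≠ (1:ℝ) := by
    rw [unitI]
    exact Filter.Eventually.filter_mono (ae_mono Measure.restrict_le_self) h2
  filter_upwards [h1, h2'] with t ht htne
  exact ⟨ht.1, lt_of_le_of_ne ht.2 htne⟩

/-- Walsh–Haar correlation coefficients. -/
def gam (j m : ℕ) : ℝ := ∫ t, walsh m t * haar j t ∂unitI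

lemma gam_eq {p j m : ℕ} (hj : j < 2 ^ p) (hm : m < 2 ^ p) :
    gam j m = (2 ^ p : ℝ)⁻¹ * ∑ k ∈ Finset.range (2 ^ p), Wd p m k * Hd p j k := by
  rw [gam, ← integral_step p (fun k => Wd p m k * Hd p j k)]
  apply integral_congr_ae
  filter_upwards [ae_Ico] with t ht
  rw [walsh_discr hm ht, haar_discr hj ht]

lemma star {p : ℕ} {I : Finset ℕ} (hI : I ⊆ Finset.range p) {j : ℕ} (hj : j < 2 ^ p)
    {t : ℝ} (ht : t ∈ Set.Ico (0:ℝ) 1) :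
    ∑ i ∈ Finset.range (∑ i ∈ I, 2 ^ i), walsh i t * gam j (i ^^^ (∑ i ∈ I, 2 ^ i)) =
      if j ≠ 0 ∧ j.log2 ∈ I then walsh (∑ i ∈ I, 2 ^ i) t * haar j t else 0 := by
  set n := ∑ i ∈ I, 2 ^ i with hn
  have hnp : n < 2 ^ p := sum_two_pow_lt hI
  have htb : ∀ q, n.testBit q = decide (q ∈ I) := testBit_finsetSum I
  have hstep1 : ∑ i ∈ Finset.range n, walsh i t * gam j (i ^^^ n) =
      ∑ m ∈ (Finset.range (2 ^ p)).filter (fun m => m ^^^ n < n),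
        gam j m * walsh (m ^^^ n) t := by
    apply Finset.sum_nbij' (fun i => i ^^^ n) (fun m => m ^^^ n)
    · intro a ha
      rw [Finset.mem_filter, Finset.mem_range, xor_cancel_right]
      exact ⟨Nat.xor_lt_two_pow (lt_trans (Finset.mem_range.1 ha) hnp) hnp, Finset.mem_range.1 ha⟩
    · intro m hm
      rw [Finset.mem_range]
      exact (Finset.mem_filter.1 hm).2
    · intro a _
      exact xor_cancel_right _ _
    · intro m _
      exact xor_cancel_right _ _
    · intro a _
      rw [xor_cancel_right, mul_comm]
  rw [hstep1, Finset.sum_filter]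
  by_cases hj0 : j = 0
  · subst hj0
    rw [if_neg (by simp)]
    apply Finset.sum_eq_zero
    intro m hm
    by_cases hc : m ^^^ n < n
    · rw [if_pos hc]
      have hm0 : m ≠ 0 := by
        intro h
        subst h
        simp at hc
      have hz : gam 0 m = 0 := by
        rw [gam_eq (Nat.two_pow_pos p) (Finset.mem_range.1 hm)]
        simp only [Hd_zero, mul_one]
        rw [sum_Wd_k (Finset.mem_range.1 hm) hm0, mul_zero]
      rw [hz, zero_mul]
    · rw [if_neg hc]
  · by_cases hqI : j.log2 ∈ I
    · rw [if_pos ⟨hj0, hqI⟩]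
      have hbq : n.testBit j.log2 = true := by rw [htb]; simp [hqI]
      have hterm : ∀ m ∈ Finset.range (2 ^ p),
          (if m ^^^ n < n then gam j m * walsh (m ^^^ n) t else 0) =
            gam j m * walsh m t * walsh n t := by
        intro m hm
        have hm' := Finset.mem_range.1 hm
        by_cases hblock : 2 ^ (j.log2) ≤ m ∧ m < 2 ^ (j.log2+1)
        · rw [if_pos (xor_lt_of_block hblock.1 hblock.2 hbq), ← walsh_mul m n t]
          ring
        · have hz : gam j m = 0 := by
            rw [gam_eq hj hm', sum_Wd_Hd_eq_zero hj0 hj hm' (by omega), mul_zero]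
          split_ifs <;> simp [hz]
      rw [Finset.sum_congr rfl hterm]
      have hinv : ∑ m ∈ Finset.range (2 ^ p), gam j m * walsh m t = haar j t := by
        have hκ := (kf_spec (p := p) ht).2
        have hterm2 : ∀ m ∈ Finset.range (2 ^ p), gam j m * walsh m t =
            (2 ^ p : ℝ)⁻¹ * ((∑ k ∈ Finset.range (2 ^ p), Wd p m k * Hd p j k) *
              Wd p m (kf p t)) := by
          intro m hm
          rw [gam_eq hj (Finset.mem_range.1 hm), walsh_discr (Finset.mem_range.1 hm) ht]
          ring
        rw [Finset.sum_congr rfl hterm2, ← Finset.mul_sum, sum_sum_Wd_Hd hκ,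
          haar_discr hj ht, ← mul_assoc, inv_mul_cancel₀ (by positivity), one_mul]
      calc ∑ m ∈ Finset.range (2 ^ p), gam j m * walsh m t * walsh n t
          = (∑ m ∈ Finset.range (2 ^ p), gam j m * walsh m t) * walsh n t := by
            rw [Finset.sum_mul]
        _ = walsh n t * haar j t := by rw [hinv]; ring
    · rw [if_neg (by tauto)]
      apply Finset.sum_eq_zero
      intro m hm
      have hm' := Finset.mem_range.1 hm
      by_cases hc : m ^^^ n < n
      · rw [if_pos hc]
        have hnb : m < 2 ^ (j.log2) ∨ 2 ^ (j.log2+1) ≤ m := by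
          by_contra hcon
          push_neg at hcon
          have hbit := testBit_of_xor_lt hcon.1 hcon.2 hc
          rw [htb] at hbit
          simp only [decide_eq_true_eq] at hbit
          exact hqI hbit
        have hz : gam j m = 0 := by
          rw [gam_eq hj hm', sum_Wd_Hd_eq_zero hj0 hj hm' hnb, mul_zero]
        rw [hz, zero_mul]
      · rw [if_neg hc]


lemma l2norm_nonneg {X : Type*} [NormedAddCommGroup X] (g : ℝ → X) : 0 ≤ l2norm g :=
  Real.sqrt_nonneg _

lemma l2norm_congr {X X' : Type*} [NormedAddCommGroup X] [NormedAddCommGroup X']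
    {g : ℝ → X} {h : ℝ → X'} (hgh : ∀ᵐ t ∂unitI, ‖g t‖ = ‖h t‖) : l2norm g = l2norm h := by
  rw [l2norm, l2norm]
  congr 1
  apply integral_congr_ae
  filter_upwards [hgh] with t ht
  rw [ht]

set_option maxHeartbeats 1000000 in
lemma integral_norm_le_l2norm {X : Type*} [NormedAddCommGroup X] (g : ℝ → X)
    (hg : MemL2 g) : ∫ t, ‖g t‖ ∂unitI ≤ l2norm g := by
  set s := l2norm g with hs
  have hA : (0:ℝ) ≤ ∫ t, ‖g t‖ ^ 2 ∂unitI := integral_nonneg fun t => by positivity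
  have hs2 : s ^ 2 = ∫ t, ‖g t‖ ^ 2 ∂unitI := Real.sq_sqrt hA
  have hint1 : Integrable (fun t => ‖g t‖) unitI :=
    (((show MemLp g 2 unitI from hg).mono_exponent (by norm_num : (1:ℝ≥0∞) ≤ 2)).integrable le_rfl).norm
  have hint2 : Integrable (fun t => ‖g t‖ ^ 2) unitI := by
    have h := (show MemLp g 2 unitI from hg).integrable_norm_rpow (by norm_num) (by norm_num)
    apply h.congr
    apply Filter.Eventually.of_forall
    intro t
    simp only []
    rw [show (ENNReal.toReal 2) = ((2:ℕ):ℝ) by simp, Real.rpow_natCast]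
  have hpt : ∀ t, 2 * s * ‖g t‖ ≤ s ^ 2 + ‖g t‖ ^ 2 := fun t => by
    nlinarith [sq_nonneg (‖g t‖ - s)]
  have hIneq : 2 * s * (∫ t, ‖g t‖ ∂unitI) ≤ s ^ 2 + s ^ 2 := by
    have h1 : ∫ t, (2 * s) * ‖g t‖ ∂unitI = (2 * s) * ∫ t, ‖g t‖ ∂unitI := by
      simpa using integral_smul (μ := unitI) (2 * s) (fun t => ‖g t‖)
    have h2 : ∫ t, (s ^ 2 + ‖g t‖ ^ 2) ∂unitI = s ^ 2 + ∫ t, ‖g t‖ ^ 2 ∂unitI := by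
      rw [integral_add (integrable_const _) hint2, integral_const, probReal_univ]
      simp
    have e1 : (0 : ℝ → ℝ) ≤ᶠ[ae unitI] (fun t => (2*s) * ‖g t‖) :=
      Filter.Eventually.of_forall fun t => by
        have h0 : 0 ≤ s := l2norm_nonneg g
        simp only [Pi.zero_apply]
        positivity
    have e2 : (fun t => (2*s) * ‖g t‖) ≤ᶠ[ae unitI] (fun t => s ^ 2 + ‖g t‖ ^ 2) :=
      Filter.Eventually.of_forall fun t => hpt t
    have h3 := integral_mono_of_nonneg e1 ((integrable_const _).add hint2) e2
    simp only [Pi.add_apply] at h3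
    rw [h1, h2, ← hs2] at h3
    linarith
  rcases eq_or_lt_of_le (l2norm_nonneg g) with hR0 | hRpos
  · have hs0 : s = 0 := hR0.symm
    have hA0 : ∫ t, ‖g t‖ ^ 2 ∂unitI = 0 := by rw [← hs2, hs0]; norm_num
    have hae : ∀ᵐ t ∂unitI, ‖g t‖ ^ 2 = 0 := by
      have := (integral_eq_zero_iff_of_nonneg (fun t => by positivity) hint2).1 hA0
      filter_upwards [this] with t ht
      exact ht
    have hz : ∫ t, ‖g t‖ ∂unitI = 0 := by
      rw [integral_eq_zero_iff_of_nonneg (fun t => norm_nonneg _) hint1]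
      filter_upwards [hae] with t ht
      have : ‖g t‖ = 0 := by nlinarith [norm_nonneg (g t)]
      exact this
    rw [hz]
    exact l2norm_nonneg g
  · nlinarith

lemma coeff_norm_le {X : Type*} [NormedAddCommGroup X] [NormedSpace ℝ X] [CompleteSpace X]
    (g : ℝ → X) (hg : MemL2 g) (i : ℕ) : ‖walshCoeff g i‖ ≤ l2norm g := by
  rw [walshCoeff]
  calc ‖∫ t, walsh i t • g t ∂unitI‖ ≤ ∫ t, ‖walsh i t • g t‖ ∂unitI :=
        norm_integral_le_integral_norm _
    _ = ∫ t, ‖g t‖ ∂unitI := by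
        apply integral_congr_ae
        apply Filter.Eventually.of_forall
        intro t
        simp only []
        rw [norm_smul, Real.norm_eq_abs, abs_walsh, one_mul]
    _ ≤ l2norm g := integral_norm_le_l2norm g hg

lemma l2norm_le_of_bound {Y : Type*} [NormedAddCommGroup Y] (g : ℝ → Y) (B : ℝ)
    (hB : 0 ≤ B) (h : ∀ t, ‖g t‖ ≤ B) : l2norm g ≤ B := by
  rw [l2norm]
  have h1 : ∫ t, ‖g t‖ ^ 2 ∂unitI ≤ B ^ 2 := by
    have h2 := integral_mono_of_nonneg (μ := unitI) (f := fun t => ‖g t‖ ^ 2) (g := fun _ => B ^ 2)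
      (Filter.Eventually.of_forall fun t => by positivity)
      (integrable_const _)
      (Filter.Eventually.of_forall fun t => by
        simp only []
        have := h t
        have := norm_nonneg (g t)
        nlinarith)
    calc ∫ t, ‖g t‖ ^ 2 ∂unitI ≤ ∫ _t, B ^ 2 ∂unitI := h2
      _ = B ^ 2 := by rw [integral_const, probReal_univ]; simp
  calc Real.sqrt (∫ t, ‖g t‖ ^ 2 ∂unitI) ≤ Real.sqrt (B ^ 2) := Real.sqrt_le_sqrt h1
    _ = B := Real.sqrt_sq hB

lemma walshSum_bound {X Y : Type*} [NormedAddCommGroup X] [NormedSpace ℝ X] [CompleteSpace X]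
    [NormedAddCommGroup Y] [NormedSpace ℝ Y] (T : X →L[ℝ] Y) (n' : ℕ) (g : ℝ → X)
    (hg : MemL2 g) :
    l2norm (fun t => T (walshSum n' g t)) ≤ (‖T‖ * n') * l2norm g := by
  apply l2norm_le_of_bound _ (‖T‖ * n' * l2norm g)
    (by have := l2norm_nonneg g; positivity)
  intro t
  calc ‖T (walshSum n' g t)‖ ≤ ‖T‖ * ‖walshSum n' g t‖ := T.le_opNorm _
    _ ≤ ‖T‖ * (n' * l2norm g) := by
        apply mul_le_mul_of_nonneg_left _ (norm_nonneg T)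
        rw [walshSum]
        calc ‖∑ i ∈ Finset.range n', walsh i t • walshCoeff g i‖
            ≤ ∑ i ∈ Finset.range n', ‖walsh i t • walshCoeff g i‖ := norm_sum_le _ _
          _ ≤ ∑ _i ∈ Finset.range n', l2norm g := by
              apply Finset.sum_le_sum
              intro i _
              rw [norm_smul, Real.norm_eq_abs, abs_walsh, one_mul]
              exact coeff_norm_le g hg i
          _ = n' * l2norm g := by rw [Finset.sum_const, Finset.card_range, nsmul_eq_mul]
    _ = ‖T‖ * n' * l2norm g := by ring

lemma coeff_built {X : Type*} [NormedAddCommGroup X] [NormedSpace ℝ X] [CompleteSpace X]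
    (p n : ℕ) (x : ℕ → X) (i : ℕ) :
    walshCoeff (fun t => walsh n t • ∑ j ∈ Finset.range (2 ^ p), haar j t • x j) i =
      ∑ j ∈ Finset.range (2 ^ p), gam j (i ^^^ n) • x j := by
  rw [walshCoeff]
  have h1 : (fun t => walsh i t • (walsh n t • ∑ j ∈ Finset.range (2 ^ p), haar j t • x j)) =
      fun t => ∑ j ∈ Finset.range (2 ^ p), (walsh (i ^^^ n) t * haar j t) • x j := by
    funext t
    rw [Finset.smul_sum, Finset.smul_sum]
    apply Finset.sum_congr rfl
    intro j _
    rw [smul_smul, smul_smul, walsh_mul]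
  rw [h1, integral_finset_sum]
  · apply Finset.sum_congr rfl
    intro j _
    rw [integral_smul_const]
    rfl
  · intro j _
    apply Integrable.smul_const
    apply integrable_unitI ((measurable_walsh _).mul (measurable_haar j)) (2 ^ ((j.log2:ℝ)/2))
    intro t
    rw [Pi.mul_apply, abs_mul, abs_walsh, one_mul]
    exact abs_haar_le j t

lemma log2_eq_of {j q : ℕ} (h1 : 2 ^ q ≤ j) (h2 : j < 2 ^ (q+1)) : j.log2 = q := by
  have hj0 : j ≠ 0 := by
    have : 0 < 2 ^ q := Nat.two_pow_pos _
    omega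
  have l1 := Nat.log2_self_le hj0
  have l2 : j < 2 ^ (j.log2 + 1) := Nat.lt_log2_self
  have a1 : j.log2 < q+1 :=
    (Nat.pow_lt_pow_iff_right (by norm_num)).1 (lt_of_le_of_lt l1 h2)
  have a2 : q < j.log2 + 1 :=
    (Nat.pow_lt_pow_iff_right (by norm_num)).1 (lt_of_le_of_lt h1 l2)
  omega

lemma walshSum_built {X : Type*} [NormedAddCommGroup X] [NormedSpace ℝ X] [CompleteSpace X]
    (p : ℕ) (I : Finset ℕ) (hI : I ⊆ Finset.range p) (x : ℕ → X)
    {t : ℝ} (ht : t ∈ Set.Ico (0:ℝ) 1) :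
    walshSum (∑ i ∈ I, 2 ^ i)
        (fun s => walsh (∑ i ∈ I, 2 ^ i) s • ∑ j ∈ Finset.range (2 ^ p), haar j s • x j) t
      = walsh (∑ i ∈ I, 2 ^ i) t •
          ∑ i ∈ I, ∑ j ∈ Finset.Ico (2 ^ i) (2 ^ (i+1)), haar j t • x j := by
  classical
  set n := ∑ i ∈ I, 2 ^ i with hn
  rw [walshSum]
  have h1 : ∀ i ∈ Finset.range n,
      walsh i t • walshCoeff
          (fun s => walsh n s • ∑ j ∈ Finset.range (2 ^ p), haar j s • x j) i =
        ∑ j ∈ Finset.range (2 ^ p), (walsh i t * gam j (i ^^^ n)) • x j := by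
    intro i _
    rw [coeff_built p n x i, Finset.smul_sum]
    apply Finset.sum_congr rfl
    intro j _
    rw [smul_smul]
  rw [Finset.sum_congr rfl h1, Finset.sum_comm]
  have h2 : ∀ j ∈ Finset.range (2 ^ p),
      ∑ i ∈ Finset.range n, (walsh i t * gam j (i ^^^ n)) • x j =
        (if j ≠ 0 ∧ j.log2 ∈ I then walsh n t * haar j t else 0) • x j := by
    intro j hj
    rw [← Finset.sum_smul, star hI (Finset.mem_range.1 hj) ht]
  rw [Finset.sum_congr rfl h2]
  have h3 : ∀ j ∈ Finset.range (2 ^ p),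
      (if j ≠ 0 ∧ j.log2 ∈ I then walsh n t * haar j t else 0) • x j =
        (if j ≠ 0 ∧ j.log2 ∈ I then walsh n t • (haar j t • x j) else 0) := by
    intro j _
    split_ifs
    · rw [← smul_smul]
    · rw [zero_smul]
  rw [Finset.sum_congr rfl h3, ← Finset.sum_filter]
  have hdisj : (↑I : Set ℕ).PairwiseDisjoint (fun i => Finset.Ico (2 ^ i) (2 ^ (i+1))) := by
    intro i _ i' _ hne
    apply Finset.disjoint_left.2
    intro j hj hj'
    rw [Finset.mem_Ico] at hj hj'
    exact hne (by rw [← log2_eq_of hj.1 hj.2, log2_eq_of hj'.1 hj'.2])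
  have hpart : (Finset.range (2 ^ p)).filter (fun j => j ≠ 0 ∧ j.log2 ∈ I) =
      I.biUnion (fun i => Finset.Ico (2 ^ i) (2 ^ (i+1))) := by
    ext j
    simp only [Finset.mem_filter, Finset.mem_biUnion, Finset.mem_range, Finset.mem_Ico]
    constructor
    · rintro ⟨_, hj0, hlog⟩
      exact ⟨j.log2, hlog, Nat.log2_self_le hj0, Nat.lt_log2_self⟩
    · rintro ⟨i, hiI, hb1, hb2⟩
      have hj0 : j ≠ 0 := by
        have : 0 < 2 ^ i := Nat.two_pow_pos _
        omega
      have hlq := log2_eq_of hb1 hb2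
      refine ⟨?_, hj0, by rw [hlq]; exact hiI⟩
      have hip := Finset.mem_range.1 (hI hiI)
      calc j < 2 ^ (i+1) := hb2
        _ ≤ 2 ^ p := Nat.pow_le_pow_right (by norm_num) (by omega)
  rw [hpart, Finset.sum_biUnion hdisj, Finset.smul_sum]
  apply Finset.sum_congr rfl
  intro i _
  rw [Finset.smul_sum]

end WalshAux

open WalshAux in
/-- **Lemma.** Let `T : X → Y` be a bounded operator, `I ⊆ {0, …, p-1}` and
`n := ∑_{i ∈ I} 2^i < 2^p`. Then for every `X`-valued dyadic martingale
`(M_0, …, M_p)` of the form `M_i = ∑_{j < 2^i} x_j h_j` one has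
`‖∑_{i ∈ I} T dM_i‖_2 ≤ δ(T|W_n, W_n) ‖M_p‖_2`. -/
theorem l2norm_sum_T_dM_le_walshDelta {X Y : Type*}
    [NormedAddCommGroup X] [NormedSpace ℝ X] [CompleteSpace X]
    [NormedAddCommGroup Y] [NormedSpace ℝ Y] [CompleteSpace Y]
    (T : X →L[ℝ] Y) (p : ℕ) (I : Finset ℕ) (hI : I ⊆ Finset.range p)
    (x : ℕ → X) (M : ℕ → ℝ → X)
    (hM : ∀ i ≤ p, M i = fun t => ∑ j ∈ Finset.range (2 ^ i), haar j t • x j) :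
    l2norm (fun t => ∑ i ∈ I, T (M (i + 1) t - M i t)) ≤
      walshDelta T (∑ i ∈ I, 2 ^ i) * l2norm (M p) := by
  classical
  set n := ∑ i ∈ I, 2 ^ i with hn
  set f : ℝ → X := fun t => walsh n t • M p t with hf
  have hMp : M p = fun t => ∑ j ∈ Finset.range (2 ^ p), haar j t • x j := hM p le_rfl
  have hfeq : f = fun s => walsh n s • ∑ j ∈ Finset.range (2 ^ p), haar j s • x j := by
    funext s
    rw [hf, hMp]
  -- MemL2 f
  have hfm : MemL2 f := by
    rw [MemL2]
    apply MemLp.of_bound (C := ∑ j ∈ Finset.range (2 ^ p), 2 ^ ((j.log2:ℝ)/2) * ‖x j‖) ?_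
    · apply Filter.Eventually.of_forall
      intro t
      calc ‖f t‖ = ‖M p t‖ := by
            rw [hf]
            simp only []
            rw [norm_smul, Real.norm_eq_abs, abs_walsh, one_mul]
        _ ≤ ∑ j ∈ Finset.range (2 ^ p), 2 ^ ((j.log2:ℝ)/2) * ‖x j‖ := by
            rw [hMp]
            simp only []
            refine (norm_sum_le _ _).trans ?_
            apply Finset.sum_le_sum
            intro j _
            rw [norm_smul, Real.norm_eq_abs]
            exact mul_le_mul_of_nonneg_right (abs_haar_le j t) (norm_nonneg _)
    · apply StronglyMeasurable.aestronglyMeasurable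
      rw [hfeq]
      apply StronglyMeasurable.smul ((measurable_walsh n).stronglyMeasurable)
      apply Finset.stronglyMeasurable_fun_sum
      intro j _
      exact ((measurable_haar j).stronglyMeasurable).smul_const (x j)
  -- the martingale differences
  have hDeq : ∀ t : ℝ, ∑ i ∈ I, (M (i + 1) t - M i t) =
      ∑ i ∈ I, ∑ j ∈ Finset.Ico (2 ^ i) (2 ^ (i+1)), haar j t • x j := by
    intro t
    apply Finset.sum_congr rfl
    intro i hi
    have hip := Finset.mem_range.1 (hI hi)
    simp only [hM (i+1) (by omega), hM i (by omega)]
    rw [Finset.sum_Ico_eq_sub _ (Nat.pow_le_pow_right (by norm_num) (by omega))]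
  -- key a.e. norm identity
  have hkey : ∀ᵐ t ∂unitI, ‖T (walshSum n f t)‖ = ‖∑ i ∈ I, T (M (i + 1) t - M i t)‖ := by
    filter_upwards [ae_Ico] with t ht
    have h1 : walshSum n f t =
        walsh n t • ∑ i ∈ I, ∑ j ∈ Finset.Ico (2 ^ i) (2 ^ (i+1)), haar j t • x j := by
      rw [hfeq]
      exact walshSum_built p I hI x ht
    rw [h1, T.map_smul, norm_smul, Real.norm_eq_abs, abs_walsh, one_mul, ← hDeq t, map_sum]
  -- conclusion via the infimum
  have hLf : l2norm (fun t => ∑ i ∈ I, T (M (i + 1) t - M i t)) =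
      l2norm (fun t => T (walshSum n f t)) := by
    apply l2norm_congr
    filter_upwards [hkey] with t ht
    rw [ht]
  have hRf : l2norm f = l2norm (M p) := by
    apply l2norm_congr
    apply Filter.Eventually.of_forall
    intro t
    rw [hf]
    simp only []
    rw [norm_smul, Real.norm_eq_abs, abs_walsh, one_mul]
  rw [walshDelta]
  set S := {c : ℝ | 0 ≤ c ∧ ∀ g : ℝ → X, MemL2 g →
    l2norm (fun t => T (walshSum n g t)) ≤ c * l2norm g} with hS
  have hmem : (‖T‖ * n) ∈ S := ⟨by positivity, fun g hg => walshSum_bound T n g hg⟩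
  have hne : S.Nonempty := ⟨_, hmem⟩
  have hall : ∀ c ∈ S, l2norm (fun t => ∑ i ∈ I, T (M (i + 1) t - M i t)) ≤
      c * l2norm (M p) := by
    intro c hc
    rw [hLf, ← hRf]
    exact hc.2 f hfm
  by_contra hcon
  push_neg at hcon
  rcases eq_or_lt_of_le (l2norm_nonneg (M p)) with hR0 | hRpos
  · have h0 := hall _ hmem
    rw [← hR0] at hcon h0
    simp only [mul_zero] at hcon h0
    exact absurd (lt_of_le_of_lt h0 hcon) (lt_irrefl _)
  · have hlt : sInf S < l2norm (fun t => ∑ i ∈ I, T (M (i + 1) t - M i t)) / l2norm (M p) := by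
      rw [lt_div_iff₀ hRpos]
      exact hcon
    obtain ⟨c, hcS, hclt⟩ := exists_lt_of_csInf_lt hne hlt
    rw [lt_div_iff₀ hRpos] at hclt
    exact absurd (lt_of_le_of_lt (hall c hcS) hclt) (lt_irrefl _)

end
end

section
/- Let n ≥ 1 have binary expansion n = Σ_{l=1}^s 2^{k_l} with 0 ≤ k_1 < k_2 < … < k_s. Then the Walsh–Dirichlet kernels satisfy D_n = w_n · Σ_{i ∈ {k_1,…,k_s}} (D_{2^{i+1}} − D_{2^i}). -/
open MeasureTheory
open scoped ENNReal

noncomputable section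

/-- The `n`-th Walsh–Dirichlet kernel `D_n = ∑_{i<n} w_i`. -/
def dirichlet (n : ℕ) (t : ℝ) : ℝ := ∑ i ∈ Finset.range n, walsh i t

lemma rademacher_mul_self (i : ℕ) (t : ℝ) : rademacher i t * rademacher i t = 1 := by
  unfold rademacher; split <;> norm_num

lemma sum_range_two_pow (a : ℕ) : ∑ i ∈ Finset.range a, 2 ^ i = 2 ^ a - 1 := by
  induction a with
  | zero => simp
  | succ a ih =>
    rw [Finset.sum_range_succ, ih, pow_succ]
    have : 1 ≤ 2 ^ a := Nat.one_le_two_pow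
    omega

lemma walsh_eq_prod {n N : ℕ} (h : n < 2 ^ N) (t : ℝ) :
    walsh n t = ∏ i ∈ Finset.range N, if n.testBit i then rademacher i t else 1 := by
  have key : ∀ M₁ M₂ : ℕ, M₁ ≤ M₂ → n < 2 ^ M₁ →
      (∏ i ∈ Finset.range M₂, if n.testBit i then rademacher i t else 1)
      = ∏ i ∈ Finset.range M₁, if n.testBit i then rademacher i t else 1 := by
    intro M₁ M₂ hM hn
    refine (Finset.prod_subset (Finset.range_subset_range.mpr hM) ?_).symm
    intro i hi hni
    simp only [Finset.mem_range, not_lt] at hni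
    have : n.testBit i = false :=
      Nat.testBit_lt_two_pow (lt_of_lt_of_le hn (Nat.pow_le_pow_right (by norm_num) hni))
    simp [this]
  have hn2 : n < 2 ^ n := (Nat.lt_two_pow_self (n := n))
  unfold walsh
  rcases le_total n N with hle | hle
  · exact (key n N hle hn2).symm
  · exact key N n hle h

lemma walsh_xor (a b : ℕ) (t : ℝ) : walsh a t * walsh b t = walsh (a ^^^ b) t := by
  set N := a + b + 1 with hN
  have ha : a < 2 ^ N := lt_of_le_of_lt (by omega) (Nat.lt_two_pow_self (n := N))
  have hb : b < 2 ^ N := lt_of_le_of_lt (by omega) (Nat.lt_two_pow_self (n := N))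
  have hab : a ^^^ b < 2 ^ N := Nat.xor_lt_two_pow ha hb
  rw [walsh_eq_prod ha t, walsh_eq_prod hb t, walsh_eq_prod hab t, ← Finset.prod_mul_distrib]
  refine Finset.prod_congr rfl fun i _ => ?_
  rw [Nat.testBit_xor]
  cases h1 : a.testBit i <;> cases h2 : b.testBit i <;>
    simp [rademacher_mul_self]

lemma two_pow_add_eq_xor {a j : ℕ} (h : j < 2 ^ a) : 2 ^ a + j = 2 ^ a ^^^ j := by
  refine Nat.eq_of_testBit_eq fun i => ?_
  rw [Nat.testBit_xor, Nat.testBit_two_pow]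
  rcases lt_trichotomy i a with hi | rfl | hi
  · rw [Nat.testBit_two_pow_add_gt hi]
    simp [Nat.ne_of_gt hi]
  · rw [Nat.testBit_two_pow_add_eq, Nat.testBit_lt_two_pow h]
    simp
  · have h1 : 2 ^ a + j < 2 ^ i := by
      have : 2 ^ (a + 1) ≤ 2 ^ i := Nat.pow_le_pow_right (by norm_num) hi
      rw [pow_succ] at this; omega
    rw [Nat.testBit_lt_two_pow h1,
      Nat.testBit_lt_two_pow (lt_of_lt_of_le h (Nat.pow_le_pow_right (by norm_num) (le_of_lt hi)))]
    simp [Nat.ne_of_lt hi]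

lemma walsh_two_pow (a : ℕ) (t : ℝ) : walsh (2 ^ a) t = rademacher a t := by
  have ha : (2:ℕ) ^ a < 2 ^ (a + 1) := by
    rw [pow_succ]; have : 1 ≤ 2 ^ a := Nat.one_le_two_pow; omega
  rw [walsh_eq_prod ha t]
  rw [Finset.prod_eq_single a]
  · simp [Nat.testBit_two_pow]
  · intro i _ hia
    simp [Nat.testBit_two_pow, Ne.symm hia]
  · intro h; exact absurd (Finset.self_mem_range_succ a) h

lemma walsh_two_pow_add {a j : ℕ} (h : j < 2 ^ a) (t : ℝ) :
    walsh (2 ^ a + j) t = rademacher a t * walsh j t := by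
  rw [two_pow_add_eq_xor h, ← walsh_xor, walsh_two_pow]

lemma dirichlet_two_pow_add {a j : ℕ} (h : j ≤ 2 ^ a) (t : ℝ) :
    dirichlet (2 ^ a + j) t = dirichlet (2 ^ a) t + rademacher a t * dirichlet j t := by
  unfold dirichlet
  rw [Finset.sum_range_add, Finset.mul_sum]
  congr 1
  refine Finset.sum_congr rfl fun i hi => ?_
  exact walsh_two_pow_add (lt_of_lt_of_le (Finset.mem_range.mp hi) h) t

lemma walsh_mul_dirichlet {a j : ℕ} (h : j < 2 ^ a) (t : ℝ) :
    walsh j t * dirichlet (2 ^ a) t = dirichlet (2 ^ a) t := by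
  unfold dirichlet
  rw [Finset.mul_sum]
  have : ∀ i ∈ Finset.range (2 ^ a), walsh j t * walsh i t = walsh (j ^^^ i) t :=
    fun i _ => walsh_xor j i t
  rw [Finset.sum_congr rfl this]
  refine Finset.sum_nbij' (fun i => j ^^^ i) (fun i => j ^^^ i) ?_ ?_ ?_ ?_ ?_
  · intro i hi
    exact Finset.mem_range.mpr (Nat.xor_lt_two_pow h (Finset.mem_range.mp hi))
  · intro i hi
    exact Finset.mem_range.mpr (Nat.xor_lt_two_pow h (Finset.mem_range.mp hi))
  · intro i _; simp [← Nat.xor_assoc]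
  · intro i _; simp [← Nat.xor_assoc]
  · intro i _; rfl

lemma dirichlet_key (K : Finset ℕ) (t : ℝ) :
    dirichlet (∑ i ∈ K, 2 ^ i) t =
      walsh (∑ i ∈ K, 2 ^ i) t *
        ∑ i ∈ K, (dirichlet (2 ^ (i + 1)) t - dirichlet (2 ^ i) t) := by
  induction K using Finset.induction_on_max with
  | empty => simp [dirichlet]
  | insert a s ha ih =>
    have hsub : s ⊆ Finset.range a := fun x hx => Finset.mem_range.mpr (ha x hx)
    have hlt : ∑ i ∈ s, 2 ^ i < 2 ^ a := by
      calc ∑ i ∈ s, 2 ^ i ≤ ∑ i ∈ Finset.range a, 2 ^ i :=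
            Finset.sum_le_sum_of_subset hsub
        _ = 2 ^ a - 1 := sum_range_two_pow a
        _ < 2 ^ a := by have : 1 ≤ 2 ^ a := Nat.one_le_two_pow; omega
    have hanotin : a ∉ s := fun h => lt_irrefl a (ha a h)
    set n' := ∑ i ∈ s, 2 ^ i with hn'
    rw [Finset.sum_insert hanotin, Finset.sum_insert hanotin]
    rw [dirichlet_two_pow_add (le_of_lt hlt) t, walsh_two_pow_add hlt t]
    have hD : dirichlet (2 ^ (a + 1)) t - dirichlet (2 ^ a) t
        = rademacher a t * dirichlet (2 ^ a) t := by
      have : (2:ℕ) ^ (a + 1) = 2 ^ a + 2 ^ a := by rw [pow_succ]; omega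
      rw [this, dirichlet_two_pow_add le_rfl t]; ring
    rw [hD, ih]
    have hw : walsh n' t * dirichlet (2 ^ a) t = dirichlet (2 ^ a) t :=
      walsh_mul_dirichlet hlt t
    have hr := rademacher_mul_self a t
    linear_combination (-(walsh n' t * dirichlet (2 ^ a) t)) * hr - hw


/-- **Lemma (Paley).** If `n = ∑_{l=1}^s 2^{k_l}` with `0 ≤ k_1 < ⋯ < k_s`
(equivalently, `n = ∑_{i ∈ K} 2^i` for a nonempty finite set `K ⊆ ℕ`), then
`D_n = w_n ∑_{i ∈ K} (D_{2^{i+1}} - D_{2^i})`. -/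
theorem dirichlet_eq_walsh_mul_sum (n : ℕ) (K : Finset ℕ) (hK : K.Nonempty)
    (hn : n = ∑ i ∈ K, 2 ^ i) (t : ℝ) :
    dirichlet n t =
      walsh n t * ∑ i ∈ K, (dirichlet (2 ^ (i + 1)) t - dirichlet (2 ^ i) t) := by
  rw [hn, dirichlet_key K t]

end
end
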